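/- Let n be a natural number, r : Fin n → ℝ, and W a multivariate polynomial over ℂ in n variables such that every exponent vector d in the support of W satisfies ∑_i d(i)·r(i) = 2. Then for every point φ ∈ ℂ^n, |W(φ)| ≤ (1/2)·√(∑_i r(i)²·|φ_i|²)·√(∑_i |(∂W/∂X_i)(φ)|²). (The superpotential is bounded by half the product of the R-axion decay constant f_a = √(∑ r_i²|φ_i|²) and the Goldstino decay constant f = √(∑ |∂_i W|²).) -/

import Mathlib

open MvPolynomial

lemma euler_id (n : ℕ) (r : Fin n → ℝ) (W : MvPolynomial (Fin n) ℂ)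
    (hR : ∀ d ∈ W.support, ∑ i, (d i : ℂ) * (r i : ℂ) = 2)
    (φ : Fin n → ℂ) :
    ∑ i, (r i : ℂ) * φ i * eval φ (pderiv i W) = 2 * eval φ W := by
  have hterm : ∀ i, eval φ (pderiv i W)
      = ∑ d ∈ W.support, coeff d W * d i * ∏ j, φ j ^ ((d - Finsupp.single i 1 : Fin n →₀ ℕ) j) := by
    intro i
    conv_lhs => rw [W.as_sum]
    rw [map_sum, map_sum]
    refine Finset.sum_congr rfl fun d _ => ?_
    rw [pderiv_monomial, eval_monomial, Finsupp.prod_pow]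
  have hmul : ∀ d ∈ W.support, ∀ i,
      (r i : ℂ) * φ i * (coeff d W * d i * ∏ j, φ j ^ ((d - Finsupp.single i 1 : Fin n →₀ ℕ) j))
      = (d i : ℂ) * r i * (coeff d W * ∏ j, φ j ^ d j) := by
    intro d _ i
    rcases Nat.eq_zero_or_pos (d i) with h0 | h1
    · simp [h0]
    · have key : φ i * ∏ j, φ j ^ ((d - Finsupp.single i 1 : Fin n →₀ ℕ) j) = ∏ j, φ j ^ d j := by
        rw [← Finset.mul_prod_erase Finset.univ _ (Finset.mem_univ i),
            ← Finset.mul_prod_erase Finset.univ (fun j => φ j ^ d j) (Finset.mem_univ i),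
            ← mul_assoc]
        congr 1
        · rw [Finsupp.tsub_apply, Finsupp.single_eq_same, ← pow_succ']
          congr 1; omega
        · exact Finset.prod_congr rfl fun j hj => by
            rw [Finsupp.tsub_apply, Finsupp.single_eq_of_ne'
              (fun h => (Finset.mem_erase.mp hj).1 h.symm), Nat.sub_zero]
      calc (r i : ℂ) * φ i * (coeff d W * d i * ∏ j, φ j ^ ((d - Finsupp.single i 1 : Fin n →₀ ℕ) j))
          = (d i : ℂ) * r i * (coeff d W *
              (φ i * ∏ j, φ j ^ ((d - Finsupp.single i 1 : Fin n →₀ ℕ) j))) := by ring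
        _ = _ := by rw [key]
  calc ∑ i, (r i : ℂ) * φ i * eval φ (pderiv i W)
      = ∑ i, ∑ d ∈ W.support,
          (r i : ℂ) * φ i * (coeff d W * d i * ∏ j, φ j ^ ((d - Finsupp.single i 1 : Fin n →₀ ℕ) j)) := by
        refine Finset.sum_congr rfl fun i _ => ?_
        rw [hterm i, Finset.mul_sum]
    _ = ∑ d ∈ W.support, ∑ i, (d i : ℂ) * r i * (coeff d W * ∏ j, φ j ^ d j) := by
        rw [Finset.sum_comm]
        exact Finset.sum_congr rfl fun d hd => Finset.sum_congr rfl fun i _ => hmul d hd i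
    _ = ∑ d ∈ W.support, 2 * (coeff d W * ∏ j, φ j ^ d j) := by
        refine Finset.sum_congr rfl fun d hd => ?_
        rw [← Finset.sum_mul, hR d hd]
    _ = 2 * eval φ W := by
        rw [← Finset.mul_sum]
        congr 1
        conv_rhs => rw [W.as_sum]
        rw [map_sum]
        exact (Finset.sum_congr rfl fun d _ => by rw [eval_monomial, Finsupp.prod_pow]).symm

/-- Bound on the superpotential: `|W(φ)| ≤ (1/2) f_a f`, where `f_a` is the R-axion decay
constant and `f` is the Goldstino decay constant. -/
theorem superpotential_bound (n : ℕ) (r : Fin n → ℝ) (W : MvPolynomial (Fin n) ℂ)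
    (hR : ∀ d ∈ W.support, ∑ i, (d i : ℂ) * (r i : ℂ) = 2)
    (φ : Fin n → ℂ) :
    ‖eval φ W‖ ≤
      (1 / 2) * Real.sqrt (∑ i, (r i) ^ 2 * ‖φ i‖ ^ 2) *
        Real.sqrt (∑ i, ‖eval φ (pderiv i W)‖ ^ 2) := by
  have hE := euler_id n r W hR φ
  have h2 : 2 * ‖eval φ W‖
      = ‖∑ i, (r i : ℂ) * φ i * eval φ (pderiv i W)‖ := by
    rw [hE, norm_mul]
    simp
  set f : Fin n → ℝ := fun i => |r i| * ‖φ i‖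
  set g : Fin n → ℝ := fun i => ‖eval φ (pderiv i W)‖
  have hf : ∀ i, 0 ≤ f i := fun i => mul_nonneg (abs_nonneg _) (norm_nonneg _)
  have hg : ∀ i, 0 ≤ g i := fun i => norm_nonneg _
  have htri : ‖∑ i, (r i : ℂ) * φ i * eval φ (pderiv i W)‖
      ≤ ∑ i, f i * g i := by
    refine (norm_sum_le _ _).trans_eq ?_
    refine Finset.sum_congr rfl fun i _ => ?_
    simp [f, g, map_mul, Complex.norm_real, mul_assoc]
  have hCS : ∑ i, f i * g i ≤
      Real.sqrt (∑ i, f i ^ 2) * Real.sqrt (∑ i, g i ^ 2) := by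
    have h := Finset.sum_mul_sq_le_sq_mul_sq Finset.univ f g
    have hnn : 0 ≤ ∑ i, f i * g i :=
      Finset.sum_nonneg fun i _ => mul_nonneg (hf i) (hg i)
    calc ∑ i, f i * g i = Real.sqrt ((∑ i, f i * g i) ^ 2) := (Real.sqrt_sq hnn).symm
      _ ≤ Real.sqrt ((∑ i, f i ^ 2) * (∑ i, g i ^ 2)) := Real.sqrt_le_sqrt h
      _ = _ := Real.sqrt_mul (Finset.sum_nonneg fun i _ => sq_nonneg _) _
  have hfa : ∑ i, f i ^ 2 = ∑ i, (r i) ^ 2 * ‖φ i‖ ^ 2 := by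
    refine Finset.sum_congr rfl fun i _ => ?_
    simp [f, mul_pow, sq_abs]
  have hgs : ∑ i, g i ^ 2 = ∑ i, ‖eval φ (pderiv i W)‖ ^ 2 := rfl
  have : 2 * ‖eval φ W‖ ≤
      Real.sqrt (∑ i, (r i) ^ 2 * ‖φ i‖ ^ 2) *
        Real.sqrt (∑ i, ‖eval φ (pderiv i W)‖ ^ 2) := by
    rw [h2, ← hfa, ← hgs]
    exact htri.trans hCS
  linarith
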